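/- Let P ∈ K[X_1^{±1},…,X_n^{±1}] be a Laurent polynomial over a field K, y ∈ (K*)^n, and u ∈ ℤ^n. If the one-variable Laurent polynomial Q(Y) = P(y_1 Y^{u_1},…, y_n Y^{u_n}) is nonzero, then Ldeg(Q) ≤ 2·|u|_∞·Ldeg(P). -/

import Mathlib

/-- The Laurent degree of a nonzero multivariate Laurent polynomial `P`: writing
`P = X^v · S` with `S` an ordinary polynomial coprime to `X_1⋯X_n`, it is `deg S`;
explicitly it equals `max_{i ∈ Supp P} ∑_j (i_j - min_{i' ∈ Supp P} i'_j)`. -/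
noncomputable def LdegM {K : Type*} [Field K] {n : ℕ} (P : AddMonoidAlgebra K (Fin n → ℤ))
    (h : P.coeff.support.Nonempty) : ℤ :=
  P.coeff.support.sup' h (fun i => ∑ j, (i j - P.coeff.support.inf' h (fun i' => i' j)))

/-- The Laurent degree of a nonzero one-variable Laurent polynomial:
`Ldeg Q = max Supp Q - min Supp Q`. -/
noncomputable def Ldeg1 {K : Type*} [Field K] (Q : AddMonoidAlgebra K ℤ)
    (h : Q.coeff.support.Nonempty) : ℤ :=
  Q.coeff.support.max' h - Q.coeff.support.min' h

set_option maxHeartbeats 1000000 in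
/-- Let `P ∈ K[X_1^{±1},…,X_n^{±1}]`, `y ∈ (K*)^n` and `u ∈ ℤ^n`. If the one-variable
Laurent polynomial `Q(Y) = P(y_1 Y^{u_1}, …, y_n Y^{u_n})` is nonzero, then
`Ldeg Q ≤ 2 · |u|_∞ · Ldeg P`. -/
theorem stmt12 (K : Type*) [Field K] (n : ℕ) (P : AddMonoidAlgebra K (Fin n → ℤ))
    (y : Fin n → Kˣ) (u : Fin n → ℤ) (Q : AddMonoidAlgebra K ℤ)
    (hQ : Q = AddMonoidAlgebra.ofCoeff (P.coeff.sum fun i c =>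
      Finsupp.single (∑ j, u j * i j) (c * ∏ j, ((y j : K) ^ i j))))
    (hP : P.coeff.support.Nonempty) (hQne : Q.coeff.support.Nonempty) :
    Ldeg1 Q hQne ≤ 2 * ((Finset.univ.sup fun j => (u j).natAbs : ℕ) : ℤ) * LdegM P hP := by
  set m : ℤ := ((Finset.univ.sup fun j => (u j).natAbs : ℕ) : ℤ) with hm
  have hm0 : 0 ≤ m := Int.natCast_nonneg _
  have hum : ∀ j, |u j| ≤ m := by
    intro j
    rw [hm, Int.abs_eq_natAbs]
    exact_mod_cast Finset.le_sup (f := fun j => (u j).natAbs) (Finset.mem_univ j)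
  have hmem : ∀ k ∈ Q.coeff.support, ∃ i ∈ P.coeff.support, k = ∑ j, u j * i j := by
    intro k hk
    rw [hQ] at hk
    classical
    have h1 : k ∈ P.coeff.support.biUnion fun i =>
        (Finsupp.single (∑ j, u j * i j) ((P.coeff i) * ∏ j, ((y j : K) ^ i j))).support :=
      Finsupp.support_sum hk
    rw [Finset.mem_biUnion] at h1
    obtain ⟨i, hi, hki⟩ := h1
    exact ⟨i, hi, Finset.mem_singleton.mp (Finsupp.support_single_subset hki)⟩
  obtain ⟨i1, hi1, hk1⟩ := hmem _ (Q.coeff.support.max'_mem hQne)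
  obtain ⟨i2, hi2, hk2⟩ := hmem _ (Q.coeff.support.min'_mem hQne)
  unfold Ldeg1
  rw [hk1, hk2]
  set inf : Fin n → ℤ := fun j => P.coeff.support.inf' hP (fun i' => i' j) with hinfdef
  have hinf : ∀ j, ∀ i ∈ P.coeff.support, inf j ≤ i j := fun j i hi =>
    Finset.inf'_le (fun i' => i' j) hi
  have hL : ∀ i ∈ P.coeff.support, ∑ j, (i j - inf j) ≤ LdegM P hP := by
    intro i hi
    simp only [hinfdef]
    rw [LdegM]
    exact (Finset.sup'_le_iff hP
      (fun i => ∑ j, (i j - P.coeff.support.inf' hP (fun i' => i' j)))).1 le_rfl i hi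
  calc (∑ j, u j * i1 j) - ∑ j, u j * i2 j
      = ∑ j, u j * (i1 j - i2 j) := by
        rw [← Finset.sum_sub_distrib]
        exact Finset.sum_congr rfl fun j _ => (mul_sub _ _ _).symm
    _ ≤ ∑ j, m * |i1 j - i2 j| := by
        refine Finset.sum_le_sum fun j _ => ?_
        calc u j * (i1 j - i2 j) ≤ |u j * (i1 j - i2 j)| := le_abs_self _
          _ = |u j| * |i1 j - i2 j| := abs_mul _ _
          _ ≤ m * |i1 j - i2 j| := mul_le_mul_of_nonneg_right (hum j) (abs_nonneg _)
    _ ≤ ∑ j, m * ((i1 j - inf j) + (i2 j - inf j)) := by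
        refine Finset.sum_le_sum fun j _ => ?_
        refine mul_le_mul_of_nonneg_left ?_ hm0
        have h1 := hinf j i1 hi1
        have h2 := hinf j i2 hi2
        rw [abs_sub_le_iff]
        constructor <;> linarith
    _ = m * (∑ j, (i1 j - inf j) + ∑ j, (i2 j - inf j)) := by
        rw [← Finset.mul_sum, Finset.sum_add_distrib]
    _ ≤ m * (LdegM P hP + LdegM P hP) :=
        mul_le_mul_of_nonneg_left (add_le_add (hL i1 hi1) (hL i2 hi2)) hm0
    _ = 2 * m * LdegM P hP := by ring
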